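/- There exists a universal constant C > 0 such that for every h > 0 and every complex sequence φ = (φ_j)_{j∈ℤ} with ∑_j h|φ_j|² < ∞, one has ‖φ‖₄ ≤ C ‖φ‖₂^{3/4} ‖D₊φ‖₂^{1/4}, where ‖φ‖_p = (∑_j h|φ_j|^p)^{1/p} and (D₊φ)_j = (φ_{j+1}−φ_j)/h. -/

import Mathlib

open Filter

private lemma aux_amgm (x y : ℝ) : x * y ≤ 1/2 * (x ^ 2 + y ^ 2) := by
  nlinarith [sq_nonneg (x - y)]

set_option maxHeartbeats 1000000

/-- Discrete Gagliardo–Nirenberg inequality in ℓ⁴: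
`‖φ‖₄ ≤ C ‖φ‖₂^{3/4} ‖D₊φ‖₂^{1/4}`, i.e. with mesh-weighted sums,
`(∑ h|φ|⁴)^{1/4} ≤ C (∑ h|φ|²)^{3/8} (∑ h|D₊φ|²)^{1/8}`. -/
theorem discrete_GNS_l4 :
    ∃ C > 0, ∀ h : ℝ, 0 < h → ∀ φ : ℤ → ℂ,
      Summable (fun j : ℤ => h * ‖φ j‖ ^ 2) →
      (∑' j : ℤ, h * ‖φ j‖ ^ 4) ^ ((1 : ℝ) / 4) ≤
        C * (∑' j : ℤ, h * ‖φ j‖ ^ 2) ^ ((3 : ℝ) / 8) *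
          (∑' j : ℤ, h * (‖φ (j + 1) - φ j‖ / h) ^ 2) ^ ((1 : ℝ) / 8) := by
  refine ⟨2, by norm_num, ?_⟩
  intro h hh φ hsum
  by_cases hz : ∀ j, φ j = 0
  · simp [hz, Real.zero_rpow]
  push_neg at hz
  obtain ⟨j₀, hj₀⟩ := hz
  set g : ℤ → ℝ := fun j => ‖φ j‖ ^ 2 with hgdef
  have hg : Summable g := by
    have h1 := hsum.mul_left (1/h)
    have : (fun j => (1/h) * (h * ‖φ j‖ ^ 2)) = g := by
      funext j; field_simp [hgdef]; rw [hgdef]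
    rwa [this] at h1
  have hg' : Summable (fun k : ℤ => g (k + 1)) :=
    hg.comp_injective (add_left_injective 1)
  set S2 : ℝ := ∑' j, g j with hS2def
  have hS2nonneg : 0 ≤ S2 := tsum_nonneg fun j => by positivity
  have hS2pos : 0 < S2 := by
    have h1 : g j₀ ≤ S2 := Summable.le_tsum hg j₀ (fun k _ => by positivity)
    have h2 : 0 < g j₀ := pow_pos (norm_pos_iff.mpr hj₀) 2
    linarith
  -- difference sequence
  set d : ℤ → ℝ := fun k => ‖φ (k + 1) - φ k‖ with hddef
  have hdnonneg : ∀ k, 0 ≤ d k := fun k => norm_nonneg _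
  have hd : Summable (fun k => d k ^ 2) := by
    apply Summable.of_nonneg_of_le (fun k => by positivity)
      (fun k => ?_) (((hg'.mul_left 2).add (hg.mul_left 2)))
    have h1 : d k ≤ ‖φ (k+1)‖ + ‖φ k‖ := norm_sub_le _ _
    have h2 : (0:ℝ) ≤ d k := hdnonneg k
    simp only [hgdef]
    nlinarith [norm_nonneg (φ (k+1)), norm_nonneg (φ k),
      sq_nonneg (‖φ (k+1)‖ - ‖φ k‖), mul_self_le_mul_self h2 h1]
  set Sd : ℝ := ∑' k, d k ^ 2 with hSddef
  have hSdnonneg : 0 ≤ Sd := tsum_nonneg fun k => by positivity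
  set u : ℤ → ℝ := fun k => ‖φ (k + 1)‖ + ‖φ k‖ with hudef
  have hu2 : Summable (fun k => u k ^ 2) := by
    apply Summable.of_nonneg_of_le (fun k => by positivity)
      (fun k => ?_) (((hg'.mul_left 2).add (hg.mul_left 2)))
    simp only [hudef, hgdef]
    nlinarith [sq_nonneg (‖φ (k+1)‖ - ‖φ k‖)]
  have huv : Summable (fun k => u k * d k) := by
    apply Summable.of_nonneg_of_le (fun k => by positivity)
      (fun k => ?_) ((hu2.add hd).mul_left (1/2))
    exact aux_amgm (u k) (d k)
  -- pointwise bound |Δ| ≤ u * d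
  have hΔle : ∀ k, |g (k + 1) - g k| ≤ u k * d k := by
    intro k
    have hx := abs_norm_sub_norm_le (φ (k+1)) (φ k)
    simp only [hgdef, hudef, hddef] at *
    set x := ‖φ (k+1)‖; set y := ‖φ k‖; set dd := ‖φ (k+1) - φ k‖
    have hx0 : 0 ≤ x := norm_nonneg _
    have hy0 : 0 ≤ y := norm_nonneg _
    have heq : |x ^ 2 - y ^ 2| = (x + y) * |x - y| := by
      rw [← abs_of_nonneg (a := x + y) (by positivity), ← abs_mul]
      ring_nf
    rw [heq]
    exact mul_le_mul_of_nonneg_left hx (by positivity)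
  have hΔ : Summable (fun k => |g (k + 1) - g k|) :=
    Summable.of_nonneg_of_le (fun k => abs_nonneg _) hΔle huv
  set T : ℝ := ∑' k, |g (k + 1) - g k| with hTdef
  -- telescoping: sup bound
  have key : ∀ j : ℤ, g j ≤ T := by
    intro j
    have hlim : Tendsto (fun N : ℕ => g (j - N)) atTop (nhds 0) := by
      have h1 : Tendsto g cofinite (nhds 0) := hg.tendsto_cofinite_zero
      have h2 : Tendsto (fun N : ℕ => j - (N : ℤ)) atTop atBot := by
        simp only [sub_eq_add_neg]
        exact tendsto_atBot_add_const_left _ j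
          (tendsto_neg_atTop_atBot.comp tendsto_natCast_atTop_atTop)
      exact h1.comp (h2.mono_right (by rw [Int.cofinite_eq]; exact le_sup_left))
    have hbound : ∀ N : ℕ, g j ≤ g (j - N) + T := by
      intro N
      have htel : ∑ i ∈ Finset.range N, (g (j - N + i + 1) - g (j - N + i))
          = g j - g (j - N) := by
        calc ∑ i ∈ Finset.range N, (g (j - N + i + 1) - g (j - N + i))
            = ∑ i ∈ Finset.range N,
                ((fun i : ℕ => g (j - N + i)) (i + 1) - (fun i : ℕ => g (j - N + i)) i) := by
              apply Finset.sum_congr rfl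
              intro i _
              have e : j - (N:ℤ) + ((i + 1 : ℕ) : ℤ) = j - N + i + 1 := by push_cast; ring
              simp only [e]
          _ = (fun i : ℕ => g (j - N + i)) N - (fun i : ℕ => g (j - N + i)) 0 :=
              Finset.sum_range_sub (fun i : ℕ => g (j - N + i)) N
          _ = g j - g (j - N) := by
              simp only [Nat.cast_zero, add_zero, sub_add_cancel]
      have hs : ∑ i ∈ Finset.range N, (g (j - N + i + 1) - g (j - N + i)) ≤ T := by
        calc ∑ i ∈ Finset.range N, (g (j - N + i + 1) - g (j - N + i))
            ≤ ∑ i ∈ Finset.range N, |g ((j - N + i) + 1) - g (j - N + i)| := by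
              apply Finset.sum_le_sum
              intro i _
              have : g (j - N + i + 1) - g (j - N + i)
                  ≤ |g ((j - N + i) + 1) - g (j - N + i)| := by
                rw [show j - N + i + 1 = (j - N + i) + 1 by ring]
                exact le_abs_self _
              exact this
          _ = ∑ k ∈ (Finset.range N).image (fun i : ℕ => j - N + i),
                |g (k + 1) - g k| := by
              rw [Finset.sum_image]
              intro a _ b _ hab
              have hab' : j - (N:ℤ) + a = j - N + b := hab
              omega
          _ ≤ T := Summable.sum_le_tsum _ (fun k _ => abs_nonneg _) hΔ
      linarith
    have := hlim.add_const T
    rw [zero_add] at this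
    exact ge_of_tendsto' this hbound
  -- positivity of Sd
  have hSdpos : 0 < Sd := by
    rcases lt_or_eq_of_le hSdnonneg with hpos | heq
    · exact hpos
    · exfalso
      have hdk : ∀ k, d k = 0 := by
        intro k
        have h1 : d k ^ 2 ≤ Sd := Summable.le_tsum hd k (fun m _ => by positivity)
        nlinarith [hdnonneg k, sq_nonneg (d k)]
      have hT0 : T = 0 := by
        have : (fun k : ℤ => |g (k + 1) - g k|) = fun _ => 0 := by
          funext k
          have h1 := hΔle k
          rw [hdk k, mul_zero] at h1
          have h2 := abs_nonneg (g (k + 1) - g k)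
          linarith
        rw [hTdef, this, tsum_zero]
      have h1 := key j₀
      rw [hT0] at h1
      have h2 : 0 < g j₀ := pow_pos (norm_pos_iff.mpr hj₀) 2
      linarith
  -- Cauchy-Schwarz via AM-GM with parameter
  set a : ℝ := Real.sqrt S2 with hadef
  set b : ℝ := Real.sqrt Sd with hbdef
  have hapos : 0 < a := Real.sqrt_pos.mpr hS2pos
  have hbpos : 0 < b := Real.sqrt_pos.mpr hSdpos
  have ha2 : a ^ 2 = S2 := Real.sq_sqrt hS2nonneg
  have hb2 : b ^ 2 = Sd := Real.sq_sqrt hSdnonneg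
  have hU : (∑' k, u k ^ 2) ≤ 4 * S2 := by
    have h1 : (∑' k, u k ^ 2) ≤ ∑' k, (2 * g (k+1) + 2 * g k) := by
      apply Summable.tsum_le_tsum _ hu2 ((hg'.mul_left 2).add (hg.mul_left 2))
      intro k
      simp only [hudef, hgdef]
      nlinarith [sq_nonneg (‖φ (k+1)‖ - ‖φ k‖)]
    have h2 : (∑' k : ℤ, (2 * g (k+1) + 2 * g k)) = 4 * S2 := by
      rw [Summable.tsum_add (hg'.mul_left 2) (hg.mul_left 2), tsum_mul_left, tsum_mul_left]
      have h3 : (∑' k : ℤ, g (k + 1)) = S2 := by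
        have := (Equiv.addRight (1:ℤ)).tsum_eq g
        simpa using this
      rw [h3, hS2def]; ring
    linarith
  have hTb : T ≤ (5/2) * (a * b) := by
    set ε : ℝ := b / a with hεdef
    have hεpos : 0 < ε := by positivity
    have h1 : T ≤ ∑' k, u k * d k := Summable.tsum_le_tsum hΔle hΔ huv
    have h2 : (∑' k, u k * d k) ≤ ∑' k, (ε * u k ^ 2 + d k ^ 2 / ε) / 2 := by
      apply Summable.tsum_le_tsum _ huv (((hu2.mul_left ε).add (hd.div_const ε)).div_const 2)
      intro k
      have h4 : Real.sqrt ε ^ 2 = ε := Real.sq_sqrt hεpos.le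
      have h5 : Real.sqrt ε ≠ 0 := (Real.sqrt_pos.mpr hεpos).ne'
      have e1 : ε * u k ^ 2 = (Real.sqrt ε * u k) ^ 2 := by rw [mul_pow, h4]
      have e2 : d k ^ 2 / ε = (d k / Real.sqrt ε) ^ 2 := by rw [div_pow, h4]
      have e3 : Real.sqrt ε * u k * (d k / Real.sqrt ε) = u k * d k := by
        field_simp
      calc u k * d k = Real.sqrt ε * u k * (d k / Real.sqrt ε) := e3.symm
        _ ≤ 1/2 * ((Real.sqrt ε * u k) ^ 2 + (d k / Real.sqrt ε) ^ 2) := aux_amgm _ _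
        _ = (ε * u k ^ 2 + d k ^ 2 / ε) / 2 := by rw [← e1, ← e2]; ring
    have h7 : (∑' k, (ε * u k ^ 2 + d k ^ 2 / ε) / 2)
        = (ε * (∑' k, u k ^ 2) + Sd / ε) / 2 := by
      rw [tsum_div_const, Summable.tsum_add (hu2.mul_left ε) (hd.div_const ε),
        tsum_mul_left, tsum_div_const]
    have h8 : ε * (∑' k, u k ^ 2) ≤ ε * (4 * S2) :=
      mul_le_mul_of_nonneg_left hU hεpos.le
    have h9 : ε * (4 * S2) + Sd / ε = 5 * (a * b) := by
      rw [hεdef, ← ha2, ← hb2]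
      field_simp
      ring
    calc T ≤ ∑' k, u k * d k := h1
      _ ≤ (∑' k, (ε * u k ^ 2 + d k ^ 2 / ε) / 2) := h2
      _ = (ε * (∑' k, u k ^ 2) + Sd / ε) / 2 := h7
      _ ≤ (ε * (4 * S2) + Sd / ε) / 2 := by linarith
      _ = (5/2) * (a * b) := by rw [h9]; ring
  -- fourth power sum bound
  have hQs : Summable (fun j => g j ^ 2) := by
    apply Summable.of_nonneg_of_le (fun j => by positivity)
      (fun j => ?_) (hg.mul_left T)
    have h1 := key j
    have h2 : 0 ≤ g j := by simp only [hgdef]; positivity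
    nlinarith
  set Q : ℝ := ∑' j, g j ^ 2 with hQdef
  have hQle : Q ≤ (5/2) * (a * b) * S2 := by
    have h1 : Q ≤ ∑' j, (5/2) * (a * b) * g j := by
      apply Summable.tsum_le_tsum _ hQs (hg.mul_left _)
      intro j
      have h2 := key j
      have h3 := hTb
      have h4 : 0 ≤ g j := by simp only [hgdef]; positivity
      nlinarith
    rwa [tsum_mul_left] at h1
  have hQnonneg : 0 ≤ Q := tsum_nonneg fun j => by positivity
  -- rewrite goal sums
  have hgoal4 : (∑' j : ℤ, h * ‖φ j‖ ^ 4) = h * Q := by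
    rw [hQdef, ← tsum_mul_left]
    congr 1; funext j; simp only [hgdef]; ring
  have hgoal2 : (∑' j : ℤ, h * ‖φ j‖ ^ 2) = h * S2 := by
    rw [hS2def, ← tsum_mul_left]
  have hgoalB : (∑' j : ℤ, h * (‖φ (j + 1) - φ j‖ / h) ^ 2) = Sd / h := by
    rw [hSddef, ← tsum_div_const]
    congr 1; funext k
    simp only [hddef]
    field_simp
  rw [hgoal4, hgoal2, hgoalB]
  have hApos : 0 < h * S2 := by positivity
  have hBpos : 0 < Sd / h := by positivity
  -- key product identity
  have hprod : (h * S2) ^ ((3:ℝ)/2) * (Sd / h) ^ ((1:ℝ)/2) = h * S2 * (a * b) := by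
    have e1 : (h * S2) ^ ((3:ℝ)/2) = (h * S2) * Real.sqrt (h * S2) := by
      rw [show (3:ℝ)/2 = 1 + 1/2 by norm_num, Real.rpow_add hApos, Real.rpow_one,
        ← Real.sqrt_eq_rpow]
    have e2 : (Sd / h) ^ ((1:ℝ)/2) = Real.sqrt (Sd / h) := (Real.sqrt_eq_rpow _).symm
    rw [e1, e2, Real.sqrt_mul hh.le, Real.sqrt_div hSdnonneg]
    have hsh : 0 < Real.sqrt h := Real.sqrt_pos.mpr hh
    rw [← hadef, ← hbdef]
    field_simp
  have hmain : h * Q ≤ 16 * ((h * S2) ^ ((3:ℝ)/2) * (Sd / h) ^ ((1:ℝ)/2)) := by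
    rw [hprod]
    have : h * Q ≤ h * ((5/2) * (a * b) * S2) := by
      exact mul_le_mul_of_nonneg_left hQle hh.le
    nlinarith [mul_pos (mul_pos hapos hbpos) (mul_pos hh hS2pos)]
  have hfinal : (h * Q) ^ ((1:ℝ)/4)
      ≤ (16 * ((h * S2) ^ ((3:ℝ)/2) * (Sd / h) ^ ((1:ℝ)/2))) ^ ((1:ℝ)/4) :=
    Real.rpow_le_rpow (by positivity) hmain (by norm_num)
  refine hfinal.trans_eq ?_
  rw [Real.mul_rpow (by norm_num) (by positivity),
    Real.mul_rpow (by positivity) (by positivity),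
    ← Real.rpow_mul hApos.le, ← Real.rpow_mul hBpos.le]
  have h16 : (16:ℝ) ^ ((1:ℝ)/4) = 2 := by
    rw [show (16:ℝ) = 2 ^ (4:ℕ) by norm_num, ← Real.rpow_natCast 2 4,
      ← Real.rpow_mul (by norm_num)]
    norm_num
  rw [h16]
  norm_num
  ring
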